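/- Let φ(t) satisfy dφ/dt = (1/2)(‖w*‖/‖w(t)‖)(φ sin φ)/π with φ(0) = φ_0 ∈ (0, π), where r < ‖w(t)‖ < R for all t > 0 with constants r, R > 0. Then for all t > 0: π - 2 cot(φ_0/2) e^{-(‖w*‖/(2R))(φ_0/π) t} < φ(t) < π - 2 cot(φ_0/2) e^{-(‖w*‖/(2r)) t} + (2/3) cot^3(φ_0/2) e^{-(3‖w*‖/(2r)) t}. -/

import Mathlib

open Real

private lemma arctan_cubic_le {x : ℝ} (hx : 0 ≤ x) : x - x^3/3 ≤ Real.arctan x := by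
  have hD : ∀ y : ℝ, HasDerivAt (fun z : ℝ => Real.arctan z - z + z^3/3)
      (1/(1+y^2) - 1 + ((3:ℕ) * y^(3-1))/3) y := fun y =>
    ((Real.hasDerivAt_arctan y).sub (hasDerivAt_id y)).add ((hasDerivAt_pow 3 y).div_const 3)
  have key : MonotoneOn (fun z : ℝ => Real.arctan z - z + z^3/3) (Set.Ici 0) := by
    apply monotoneOn_of_deriv_nonneg (convex_Ici 0)
    · exact Continuous.continuousOn (by continuity)
    · exact fun y _ => (hD y).differentiableAt.differentiableWithinAt
    · intro y _
      rw [(hD y).deriv]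
      have h1 : (0:ℝ) < 1 + y^2 := by positivity
      have h2 : 1/(1+y^2) - 1 + ((3:ℕ) * y^(3-1))/3 = y^4/(1+y^2) := by
        push_cast; field_simp; ring
      rw [h2]; positivity
  have h0 := key Set.self_mem_Ici (Set.mem_Ici.2 hx) hx
  simp only [Real.arctan_zero] at h0
  norm_num at h0
  linarith

private lemma cot_half_hasDeriv {a : ℝ} {W φ : ℝ → ℝ} {u : ℝ}
    (hφu : HasDerivAt φ ((1/2) * (a / W u) * (φ u * Real.sin (φ u)) / π) u)
    (h1 : 0 < φ u) (h2 : φ u < π) :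
    HasDerivAt (fun v => Real.cot (φ v / 2))
      (-((a / W u) * φ u / (2*π)) * Real.cot (φ u / 2)) u := by
  have hs : 0 < Real.sin (φ u / 2) :=
    Real.sin_pos_of_pos_of_lt_pi (by linarith) (by linarith [Real.pi_pos])
  have hsne : Real.sin (φ u / 2) ≠ 0 := ne_of_gt hs
  have hdiv : HasDerivAt (fun x => Real.cos x / Real.sin x)
      ((-Real.sin (φ u / 2) * Real.sin (φ u / 2) - Real.cos (φ u / 2) * Real.cos (φ u / 2)) /
        Real.sin (φ u / 2) ^ 2) (φ u / 2) :=
    (Real.hasDerivAt_cos _).div (Real.hasDerivAt_sin _) hsne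
  have hcomp := hdiv.comp u (hφu.div_const 2)
  have hfun : (fun v => Real.cot (φ v / 2)) =
      (fun x => Real.cos x / Real.sin x) ∘ (fun v => φ v / 2) := by
    funext v; simp [Function.comp, Real.cot_eq_cos_div_sin]
  rw [hfun]
  convert hcomp using 1
  case e'_4 => rfl
  case e'_5 => rfl
  have hsin2 : Real.sin (φ u) = 2 * Real.sin (φ u / 2) * Real.cos (φ u / 2) := by
    rw [show φ u = 2 * (φ u / 2) by ring, Real.sin_two_mul]; ring_nf
  have hsq : Real.sin (φ u / 2) ^ 2 + Real.cos (φ u / 2) ^ 2 = 1 :=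
    Real.sin_sq_add_cos_sq _
  rw [Real.cot_eq_cos_div_sin, hsin2]
  have hpi : π ≠ 0 := ne_of_gt Real.pi_pos
  have hneg : -Real.sin (φ u / 2) * Real.sin (φ u / 2) - Real.cos (φ u / 2) * Real.cos (φ u / 2)
      = -1 := by nlinarith [hsq]
  rw [hneg]
  set s := Real.sin (φ u / 2) with hsdef
  set c := Real.cos (φ u / 2) with hcdef
  field_simp

/-- Angle bounds for the one-layer single ReLU neuron gradient flow, assuming
`r < ‖w(t)‖ < R` for all `t > 0`. -/
theorem one_layer_angle_bounds
    (a r R : ℝ) (ha : 0 < a) (hr : 0 < r) (hR : 0 < R)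
    (W φ : ℝ → ℝ) (φ0 : ℝ) (hinit : φ 0 = φ0) (h0 : 0 < φ0 ∧ φ0 < π)
    (hbound : ∀ t > 0, r < W t ∧ W t < R)
    (hφ : ∀ t, HasDerivAt φ ((1/2) * (a / W t) * (φ t * Real.sin (φ t)) / π) t) :
    ∀ t > 0,
      π - 2 * Real.cot (φ0/2) * Real.exp (-(a/(2*R)) * (φ0/π) * t) < φ t ∧
      φ t < π - 2 * Real.cot (φ0/2) * Real.exp (-(a/(2*r)) * t)
              + (2/3) * (Real.cot (φ0/2))^3 * Real.exp (-(3*a/(2*r)) * t) := by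
  obtain ⟨h01, h02⟩ := h0
  have hpi := Real.pi_pos
  have hconφ : Continuous φ :=
    continuous_iff_continuousAt.2 fun u => (hφ u).differentiableAt.continuousAt
  have hderivpos : ∀ v, 0 < v → 0 < φ v → φ v < π → 0 < deriv φ v := by
    intro v hv h1 h2
    rw [(hφ v).deriv]
    have hW := hbound v hv
    have hWv : 0 < W v := hr.trans hW.1
    have hsin : 0 < Real.sin (φ v) := Real.sin_pos_of_pos_of_lt_pi h1 h2
    exact div_pos (mul_pos (mul_pos (by norm_num) (div_pos ha hWv)) (mul_pos h1 hsin)) hpi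
  have hcotpos : ∀ x : ℝ, 0 < x → x < π → 0 < Real.cot (x/2) := by
    intro x h1 h2
    rw [Real.cot_eq_cos_div_sin]
    exact div_pos (Real.cos_pos_of_mem_Ioo ⟨by linarith, by linarith⟩)
      (Real.sin_pos_of_pos_of_lt_pi (by linarith) (by linarith))
  have hgcont : ∀ (k : ℝ) (S : Set ℝ), (∀ u ∈ S, 0 < φ u ∧ φ u ≤ π) →
      ContinuousOn (fun v => Real.cot (φ v / 2) * Real.exp (k * v)) S := by
    intro k S hS
    have h1 : (fun v => Real.cot (φ v / 2) * Real.exp (k * v)) =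
        fun v => (Real.cos (φ v / 2) / Real.sin (φ v / 2)) * Real.exp (k * v) := by
      funext v; rw [Real.cot_eq_cos_div_sin]
    rw [h1]
    apply ContinuousOn.mul
    · apply ContinuousOn.div
      · exact (Real.continuous_cos.comp (hconφ.div_const 2)).continuousOn
      · exact (Real.continuous_sin.comp (hconφ.div_const 2)).continuousOn
      · intro u hu
        have h := hS u hu
        exact ne_of_gt (Real.sin_pos_of_pos_of_lt_pi (by linarith [h.1]) (by linarith [h.2]))
    · exact (Real.continuous_exp.comp (continuous_const.mul continuous_id)).continuousOn
  have hFd : ∀ (k v : ℝ), 0 < φ v → φ v < π →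
      HasDerivAt (fun y => Real.cot (φ y / 2) * Real.exp (k * y))
        ((-((a / W v) * φ v / (2*π)) * Real.cot (φ v / 2)) * Real.exp (k * v)
          + Real.cot (φ v / 2) * (Real.exp (k * v) * k)) v := by
    intro k v h1 h2
    have he : HasDerivAt (fun y : ℝ => k * y) k v := by
      simpa using (hasDerivAt_id v).const_mul k
    exact (cot_half_hasDeriv (hφ v) h1 h2).mul he.exp
  have hKgt : ∀ v, 0 < v → 0 < φ v → φ v < π → (a / W v) * φ v / (2*π) < a/(2*r) := by
    intro v hv h1 h2
    have hW := hbound v hv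
    have hWv : 0 < W v := hr.trans hW.1
    have hAW : 0 < a / W v := div_pos ha hWv
    rw [div_lt_div_iff₀ (by positivity) (by positivity)]
    have h5 : φ v * r < π * W v := mul_lt_mul'' h2 hW.1 h1.le hr.le
    have h3 : a / W v * W v = a := div_mul_cancel₀ a (ne_of_gt hWv)
    nlinarith [mul_lt_mul_of_pos_left h5 hAW]
  -- invariance: φ stays in (0, π) for nonnegative times
  have hmem : ∀ u, 0 ≤ u → φ u ∈ Set.Ioo 0 π := by
    by_contra hbad
    push_neg at hbad
    obtain ⟨u0, hu00, hu0⟩ := hbad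
    set Sb : Set ℝ := Set.Ici 0 ∩ φ ⁻¹' (Set.Ioo 0 π)ᶜ with hSbdef
    have hclosed : IsClosed Sb := isClosed_Ici.inter (isOpen_Ioo.isClosed_compl.preimage hconφ)
    have hne : Sb.Nonempty := ⟨u0, hu00, hu0⟩
    have hbdd : BddBelow Sb := ⟨0, fun x hx => hx.1⟩
    set s := sInf Sb with hsdef
    have hsmem : s ∈ Sb := hclosed.csInf_mem hne hbdd
    have hs0 : 0 ≤ s := hsmem.1
    have hφ0mem : φ 0 ∈ Set.Ioo 0 π := by rw [hinit]; exact ⟨h01, h02⟩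
    have hsne0 : s ≠ 0 := by
      intro h
      apply hsmem.2
      rw [h]
      exact hφ0mem
    have hspos : 0 < s := lt_of_le_of_ne hs0 (Ne.symm hsne0)
    have hIoo : ∀ u, 0 ≤ u → u < s → φ u ∈ Set.Ioo 0 π := by
      intro u h1 h2
      by_contra h
      exact absurd (csInf_le hbdd ⟨h1, h⟩) (not_le.2 h2)
    have hle : φ s ≤ π := by
      by_contra hgt
      push_neg at hgt
      have hnb : φ ⁻¹' Set.Ioi π ∈ nhds s :=
        (hconφ.continuousAt).preimage_mem_nhds (Ioi_mem_nhds hgt)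
      obtain ⟨ε, hε, hball⟩ := Metric.mem_nhds_iff.1 hnb
      set u := max 0 (s - ε/2) with hudef
      have hu0 : 0 ≤ u := le_max_left _ _
      have hus : u < s := max_lt hspos (by linarith)
      have humem : u ∈ Metric.ball s ε := by
        rw [Metric.mem_ball, Real.dist_eq, abs_of_nonpos (by linarith)]
        have h6 : s - ε/2 ≤ u := le_max_right _ _
        linarith
      have h7 := hball humem
      simp only [Set.mem_preimage, Set.mem_Ioi] at h7
      have h8 := (hIoo u hu0 hus).2
      linarith
    have hmono : StrictMonoOn φ (Set.Icc 0 s) := by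
      apply strictMonoOn_of_deriv_pos (convex_Icc 0 s) hconφ.continuousOn
      intro v hv
      rw [interior_Icc] at hv
      have h := hIoo v hv.1.le hv.2
      exact hderivpos v hv.1 h.1 h.2
    have hφspos : 0 < φ s := by
      have h9 := hmono (Set.left_mem_Icc.2 hs0) (Set.right_mem_Icc.2 hs0) hspos
      rw [hinit] at h9
      linarith
    have hnot : φ s ∉ Set.Ioo 0 π := hsmem.2
    have hφs : φ s = π := by
      rcases lt_or_eq_of_le hle with h | h
      · exact absurd ⟨hφspos, h⟩ hnot
      · exact h
    have hφS : ∀ u ∈ Set.Icc 0 s, 0 < φ u ∧ φ u ≤ π := by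
      intro u hu
      rcases lt_or_eq_of_le hu.2 with h | h
      · have h10 := hIoo u hu.1 h
        exact ⟨h10.1, h10.2.le⟩
      · rw [h, hφs]; exact ⟨hpi, le_refl π⟩
    have hFmono : StrictMonoOn
        (fun v => Real.cot (φ v / 2) * Real.exp ((a/(2*r)) * v)) (Set.Icc 0 s) := by
      apply strictMonoOn_of_deriv_pos (convex_Icc 0 s) (hgcont _ _ hφS)
      intro v hv
      rw [interior_Icc] at hv
      have h := hIoo v hv.1.le hv.2
      have hd := hFd (a/(2*r)) v h.1 h.2
      rw [hd.deriv]
      have hcot := hcotpos (φ v) h.1 h.2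
      have hKv := hKgt v hv.1 h.1 h.2
      have hexp : 0 < Real.exp ((a/(2*r))*v) := Real.exp_pos _
      nlinarith [mul_pos (sub_pos.2 hKv) (mul_pos hcot hexp)]
    have hF0 : Real.cot (φ 0 / 2) * Real.exp ((a/(2*r)) * 0) = Real.cot (φ0/2) := by
      rw [hinit, mul_zero, Real.exp_zero, mul_one]
    have hFs : Real.cot (φ s / 2) * Real.exp ((a/(2*r)) * s) = 0 := by
      rw [hφs, Real.cot_eq_cos_div_sin]
      simp [Real.cos_pi_div_two]
    have hlt := hFmono (Set.left_mem_Icc.2 hs0) (Set.right_mem_Icc.2 hs0) hspos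
    simp only [hF0, hFs] at hlt
    have h11 := hcotpos φ0 h01 h02
    linarith
  -- main part
  intro t ht
  have hmemt := hmem t ht.le
  have hmonoφ : StrictMonoOn φ (Set.Icc 0 t) := by
    apply strictMonoOn_of_deriv_pos (convex_Icc 0 t) hconφ.continuousOn
    intro v hv
    rw [interior_Icc] at hv
    have h := hmem v hv.1.le
    exact hderivpos v hv.1 h.1 h.2
  have hφS2 : ∀ u ∈ Set.Icc 0 t, 0 < φ u ∧ φ u ≤ π := fun u hu =>
    ⟨(hmem u hu.1).1, (hmem u hu.1).2.le⟩
  have hFmono2 : StrictMonoOn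
      (fun v => Real.cot (φ v / 2) * Real.exp ((a/(2*r)) * v)) (Set.Icc 0 t) := by
    apply strictMonoOn_of_deriv_pos (convex_Icc 0 t) (hgcont _ _ hφS2)
    intro v hv
    rw [interior_Icc] at hv
    have h := hmem v hv.1.le
    have hd := hFd (a/(2*r)) v h.1 h.2
    rw [hd.deriv]
    have hcot := hcotpos (φ v) h.1 h.2
    have hKv := hKgt v hv.1 h.1 h.2
    have hexp : 0 < Real.exp ((a/(2*r))*v) := Real.exp_pos _
    nlinarith [mul_pos (sub_pos.2 hKv) (mul_pos hcot hexp)]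
  have hlow : Real.cot (φ0/2) * Real.exp (-(a/(2*r) * t)) < Real.cot (φ t / 2) := by
    have h1 := hFmono2 (Set.left_mem_Icc.2 ht.le) (Set.right_mem_Icc.2 ht.le) ht
    simp only [hinit, mul_zero, Real.exp_zero, mul_one] at h1
    have h2 := mul_lt_mul_of_pos_right h1 (Real.exp_pos (-(a/(2*r) * t)))
    rw [mul_assoc, ← Real.exp_add, show (a/(2*r))*t + -(a/(2*r)*t) = 0 by ring,
      Real.exp_zero, mul_one] at h2
    exact h2
  have hGanti : StrictAntiOn
      (fun v => Real.cot (φ v / 2) * Real.exp (((a/(2*R)) * (φ0/π)) * v)) (Set.Icc 0 t) := by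
    apply strictAntiOn_of_deriv_neg (convex_Icc 0 t) (hgcont _ _ hφS2)
    intro v hv
    rw [interior_Icc] at hv
    have h := hmem v hv.1.le
    have hd := hFd ((a/(2*R)) * (φ0/π)) v h.1 h.2
    rw [hd.deriv]
    have hcot := hcotpos (φ v) h.1 h.2
    have hW := hbound v hv.1
    have hWv : 0 < W v := hr.trans hW.1
    have hφ0v : φ0 < φ v := by
      have h12 := hmonoφ (Set.left_mem_Icc.2 ht.le)
        (⟨hv.1.le, hv.2.le⟩ : v ∈ Set.Icc 0 t) hv.1
      rwa [hinit] at h12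
    have hLlt : (a/(2*R)) * (φ0/π) < (a / W v) * φ v / (2*π) := by
      rw [show (a/(2*R)) * (φ0/π) = (a*φ0)/(2*R*π) by ring,
          show (a / W v) * φ v / (2*π) = (a * φ v)/(W v * (2*π)) by
            field_simp,
          div_lt_div_iff₀ (by positivity) (by positivity)]
      have h5 : φ0 * W v < φ v * R := mul_lt_mul'' hφ0v hW.2 h01.le hWv.le
      nlinarith [mul_lt_mul_of_pos_left h5 (mul_pos (mul_pos two_pos hpi) ha)]
    have hexp : 0 < Real.exp (((a/(2*R)) * (φ0/π))*v) := Real.exp_pos _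
    nlinarith [mul_pos (sub_pos.2 hLlt) (mul_pos hcot hexp)]
  have hup : Real.cot (φ t / 2) < Real.cot (φ0/2) * Real.exp (-((a/(2*R)) * (φ0/π) * t)) := by
    have h1 := hGanti (Set.left_mem_Icc.2 ht.le) (Set.right_mem_Icc.2 ht.le) ht
    simp only [hinit, mul_zero, Real.exp_zero, mul_one] at h1
    have h2 := mul_lt_mul_of_pos_right h1 (Real.exp_pos (-((a/(2*R)) * (φ0/π) * t)))
    rw [mul_assoc, ← Real.exp_add,
      show ((a/(2*R)) * (φ0/π))*t + -((a/(2*R)) * (φ0/π) * t) = 0 by ring,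
      Real.exp_zero, mul_one] at h2
    exact h2
  have hg0 : 0 < Real.cot (φ0/2) := hcotpos φ0 h01 h02
  have hxpos : 0 < Real.cot (φ t / 2) := hcotpos (φ t) hmemt.1 hmemt.2
  have hid : Real.tan ((π - φ t)/2) = Real.cot (φ t / 2) := by
    rw [show (π - φ t)/2 = π/2 - φ t/2 by ring, Real.tan_eq_sin_div_cos,
        Real.sin_pi_div_two_sub, Real.cos_pi_div_two_sub, Real.cot_eq_cos_div_sin]
  constructor
  · have hlt2 : (π - φ t)/2 < Real.tan ((π - φ t)/2) :=
      Real.lt_tan (by linarith [hmemt.2]) (by linarith [hmemt.1])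
    rw [hid] at hlt2
    rw [show -(a/(2*R)) * (φ0/π) * t = -((a/(2*R)) * (φ0/π) * t) by ring]
    linarith
  · have harc : Real.arctan (Real.cot (φ t / 2)) = (π - φ t)/2 := by
      rw [← hid]
      exact Real.arctan_tan (by linarith [hmemt.2]) (by linarith [hmemt.1])
    set y := Real.cot (φ0/2) * Real.exp (-(a/(2*r) * t)) with hydef
    have hypos : 0 < y := mul_pos hg0 (Real.exp_pos _)
    have h6 : Real.arctan y < Real.arctan (Real.cot (φ t / 2)) := Real.arctan_strictMono hlow
    have h7 : y - y^3/3 ≤ Real.arctan y := arctan_cubic_le hypos.le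
    have h8 : y - y^3/3 < (π - φ t)/2 := by rw [← harc]; linarith
    have hy3 : y^3 = (Real.cot (φ0/2))^3 * (Real.exp (-(a/(2*r) * t)))^3 := by
      rw [hydef, mul_pow]
    have hexp3 : Real.exp (-(3*a/(2*r)) * t) = (Real.exp (-(a/(2*r) * t)))^3 := by
      rw [show (-(3*a/(2*r)) * t) = (-(a/(2*r)*t)) + ((-(a/(2*r)*t)) + (-(a/(2*r)*t))) by ring,
          Real.exp_add, Real.exp_add]
      ring
    rw [show -(a/(2*r)) * t = -(a/(2*r) * t) by ring, hexp3]
    linarith [h8, hy3, hydef]
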